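/- arXiv:1101.4304 — 2 statements merged into one kernel-verified Lean document; each statement's English description precedes it below -/
import Mathlib

section
/- Let R be a ring and let M and N be R-modules with M Noetherian. If M ⊕ N is isomorphic to M, then N = 0. -/
/-- If `M` is a Noetherian `R`-module, `N` any `R`-module, and `M ⊕ N ≅ M`
as `R`-modules, then `N = 0`. -/
theorem noetherian_summand_absorption
    (R : Type*) [Ring R]
    (M : Type*) [AddCommGroup M] [Module R M] [IsNoetherian R M]
    (N : Type*) [AddCommGroup N] [Module R N]
    (e : (M × N) ≃ₗ[R] M) :
    ∀ n : N, n = 0 := by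
  intro n
  set g : M →ₗ[R] M := (LinearMap.fst R M N).comp e.symm.toLinearMap with hg
  have hsurj : Function.Surjective g := fun m => ⟨e (m, 0), by simp [hg]⟩
  have hinj : Function.Injective g :=
    IsNoetherian.injective_of_surjective_endomorphism g hsurj
  have h0 : g (e (0, n)) = g 0 := by simp [hg]
  have := hinj h0
  have h2 : (0, n) = ((0 : M), (0 : N)) := by
    apply e.injective; simpa using this
  exact (Prod.ext_iff.mp h2).2
end

section
/- In C[x,y,t,w₀,w₁,w₂], there is an equality of cycles V(y² − x³ − t²x², y w₂ + t x² w₁, w₀, w₁, w₂ − 1) = 2·V(x, y, w₀, w₁, w₂ − 1) + V(x + t², y, w₀, w₁, w₂ − 1). -/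
open MvPolynomial

/-- The length of a module, as the Krull dimension of its lattice of submodules. -/
noncomputable def moduleLength (R M : Type*) [Ring R] [AddCommGroup M] [Module R M] :
    WithBot ℕ∞ :=
  Order.krullDim (Submodule R M)

section OrderAux

lemma krullDim_eq_one_of {α : Type*} [PartialOrder α] [BoundedOrder α]
    (hbt : (⊥ : α) ≠ ⊤) (h : ∀ a : α, a = ⊥ ∨ a = ⊤) :
    Order.krullDim α = 1 := by
  apply le_antisymm
  · apply iSup_le
    intro p
    suffices hl : p.length ≤ 1 by exact_mod_cast hl
    by_contra hl
    push_neg at hl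
    have lt1 : p.toFun ⟨0, by omega⟩ < p.toFun ⟨1, by omega⟩ :=
      p.strictMono (by exact Fin.mk_lt_mk.mpr (by omega))
    have lt2 : p.toFun ⟨1, by omega⟩ < p.toFun ⟨2, by omega⟩ :=
      p.strictMono (by exact Fin.mk_lt_mk.mpr (by omega))
    rcases h (p.toFun ⟨1, by omega⟩) with h1 | h1
    · rw [h1] at lt1; exact (not_lt_bot lt1)
    · rw [h1] at lt2; exact (not_top_lt lt2)
  · have hlen : ((⟨1, ![⊥, ⊤], by
        intro i
        fin_cases i
        simpa using lt_of_le_of_ne le_top hbt⟩ : LTSeries α)).length = 1 := rfl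
    calc (1 : WithBot ℕ∞) = ((1 : ℕ) : WithBot ℕ∞) := by norm_num
    _ ≤ Order.krullDim α := by
        rw [← hlen]; exact Order.LTSeries.length_le_krullDim _

lemma krullDim_eq_two_of {α : Type*} [PartialOrder α] [BoundedOrder α]
    (n : α) (h1 : (⊥ : α) < n) (h2 : n < ⊤) (h : ∀ a : α, a = ⊥ ∨ a = n ∨ a = ⊤) :
    Order.krullDim α = 2 := by
  apply le_antisymm
  · apply iSup_le
    intro p
    suffices hl : p.length ≤ 2 by exact_mod_cast hl
    by_contra hl
    push_neg at hl
    have lt1 : p.toFun ⟨0, by omega⟩ < p.toFun ⟨1, by omega⟩ :=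
      p.strictMono (by exact Fin.mk_lt_mk.mpr (by omega))
    have lt2 : p.toFun ⟨1, by omega⟩ < p.toFun ⟨2, by omega⟩ :=
      p.strictMono (by exact Fin.mk_lt_mk.mpr (by omega))
    have lt3 : p.toFun ⟨2, by omega⟩ < p.toFun ⟨3, by omega⟩ :=
      p.strictMono (by exact Fin.mk_lt_mk.mpr (by omega))
    have e1 : p.toFun ⟨1, by omega⟩ = n := by
      rcases h (p.toFun ⟨1, by omega⟩) with h' | h' | h'
      · rw [h'] at lt1; exact absurd lt1 not_lt_bot
      · exact h'
      · rw [h'] at lt2; exact absurd (lt2.trans lt3) not_top_lt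
    have e2 : p.toFun ⟨2, by omega⟩ = n := by
      rcases h (p.toFun ⟨2, by omega⟩) with h' | h' | h'
      · rw [h'] at lt2; exact absurd (lt1.trans lt2) not_lt_bot
      · exact h'
      · rw [h'] at lt3; exact absurd lt3 not_top_lt
    rw [e1, e2] at lt2
    exact lt_irrefl _ lt2
  · have hlen : ((⟨2, ![⊥, n, ⊤], by
        intro i
        fin_cases i <;> simpa using by first | exact h1 | exact h2⟩ : LTSeries α)).length = 2 := rfl
    calc (2 : WithBot ℕ∞) = ((2 : ℕ) : WithBot ℕ∞) := by norm_num
    _ ≤ Order.krullDim α := by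
        rw [← hlen]; exact Order.LTSeries.length_le_krullDim _

end OrderAux

section LocAux

variable {A B : Type*} [CommRing A] [CommRing B] [Algebra A B]
  (p : Ideal A) [p.IsPrime] [IsLocalization.AtPrime B p]

lemma map_prime_ne_top' : p.map (algebraMap A B) ≠ ⊤ := by
  haveI := IsLocalization.AtPrime.isLocalRing B p
  have heq : p.map (algebraMap A B) = IsLocalRing.maximalIdeal B := by
    conv_lhs => rw [← IsLocalization.AtPrime.comap_maximalIdeal B p]
    exact IsLocalization.map_comap p.primeCompl B _
  rw [heq]
  exact (IsLocalRing.maximalIdeal.isMaximal B).ne_top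

lemma isUnit_of_not_mem_map' {z : B} (hz : z ∉ p.map (algebraMap A B)) : IsUnit z := by
  haveI := IsLocalization.AtPrime.isLocalRing B p
  have heq : p.map (algebraMap A B) = IsLocalRing.maximalIdeal B := by
    conv_lhs => rw [← IsLocalization.AtPrime.comap_maximalIdeal B p]
    exact IsLocalization.map_comap p.primeCompl B _
  rw [heq] at hz
  by_contra hu
  exact hz ((IsLocalRing.mem_maximalIdeal z).mpr hu)

end LocAux

namespace PolarCycleTwelve

noncomputable abbrev R := MvPolynomial (Fin 3) ℂ

noncomputable abbrev x : R := X 0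
noncomputable abbrev y : R := X 1
noncomputable abbrev t : R := X 2

lemma t_not_mem_p1 : t ∉ Ideal.span ({x, y} : Set R) := by
  intro ht
  have hle : Ideal.span ({x, y} : Set R) ≤
      RingHom.ker (aeval (![0, 0, 1] : Fin 3 → ℂ)).toRingHom := by
    rw [Ideal.span_le]
    rintro z (rfl | rfl) <;> simp [RingHom.mem_ker]
  have := hle ht
  simp [RingHom.mem_ker] at this

lemma t_not_mem_p2 : t ∉ Ideal.span ({x + t ^ 2, y} : Set R) := by
  intro ht
  have hle : Ideal.span ({x + t ^ 2, y} : Set R) ≤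
      RingHom.ker (aeval (![-1, 0, 1] : Fin 3 → ℂ)).toRingHom := by
    rw [Ideal.span_le]
    rintro z (rfl | rfl) <;> simp [RingHom.mem_ker]
  have := hle ht
  simp [RingHom.mem_ker] at this

lemma x_mem_p1 : x ∈ Ideal.span ({x, y} : Set R) :=
  Ideal.subset_span (Set.mem_insert _ _)

lemma y_mem_p1 : y ∈ Ideal.span ({x, y} : Set R) :=
  Ideal.subset_span (Set.mem_insert_of_mem _ rfl)

lemma xt_mem_p2 : x + t ^ 2 ∈ Ideal.span ({x + t ^ 2, y} : Set R) :=
  Ideal.subset_span (Set.mem_insert _ _)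

lemma y_mem_p2 : y ∈ Ideal.span ({x + t ^ 2, y} : Set R) :=
  Ideal.subset_span (Set.mem_insert_of_mem _ rfl)

lemma xt_not_mem_p1 (hp₁ : (Ideal.span ({x, y} : Set R)).IsPrime) :
    x + t ^ 2 ∉ Ideal.span ({x, y} : Set R) := by
  intro h
  have ht2 : t ^ 2 ∈ Ideal.span ({x, y} : Set R) := by
    have := Ideal.sub_mem _ h x_mem_p1
    simpa using this
  exact t_not_mem_p1 (hp₁.mem_of_pow_mem 2 ht2)

lemma x_not_mem_p2 (hp₂ : (Ideal.span ({x + t ^ 2, y} : Set R)).IsPrime) :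
    x ∉ Ideal.span ({x + t ^ 2, y} : Set R) := by
  intro h
  have ht2 : t ^ 2 ∈ Ideal.span ({x + t ^ 2, y} : Set R) := by
    have := Ideal.sub_mem _ xt_mem_p2 h
    simpa using this
  exact t_not_mem_p2 (hp₂.mem_of_pow_mem 2 ht2)

/-- substitution killing `x` and `y` -/
noncomputable def τ : R →ₐ[ℂ] R := aeval ![0, 0, X 2]

/-- substitution killing `y` only -/
noncomputable def σ : R →ₐ[ℂ] R := aeval ![X 0, 0, X 2]

lemma tau_comp_sigma : τ.comp σ = τ := by
  apply MvPolynomial.algHom_ext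
  intro i
  fin_cases i <;> simp [τ, σ]

lemma mem_p1_of_tau_eq_zero {s : R} (hs : τ s = 0) : s ∈ Ideal.span ({x, y} : Set R) := by
  have hcomp : (Ideal.Quotient.mkₐ ℂ (Ideal.span ({x, y} : Set R))).comp τ =
      Ideal.Quotient.mkₐ ℂ (Ideal.span ({x, y} : Set R)) := by
    apply MvPolynomial.algHom_ext
    intro i
    fin_cases i <;> simp [τ]
    · exact (Ideal.Quotient.eq_zero_iff_mem.mpr (Ideal.subset_span (by simp))).symm
    · exact (Ideal.Quotient.eq_zero_iff_mem.mpr (Ideal.subset_span (by simp))).symm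
  have h2 := DFunLike.congr_fun hcomp s
  simp only [AlgHom.coe_comp, Function.comp_apply, hs, map_zero,
    Ideal.Quotient.mkₐ_eq_mk] at h2
  exact Ideal.Quotient.eq_zero_iff_mem.mp h2.symm

/-- If `s·x` lies in the ideal `⟨y, x²(x+t²)⟩` with `s ∉ ⟨x, y⟩`, contradiction. -/
lemma key_not_dvd {s : R} (hs : s ∉ Ideal.span ({x, y} : Set R))
    (hxs : x * s ∈ Ideal.span ({y, x ^ 2 * (x + t ^ 2)} : Set R)) : False := by
  rw [Ideal.mem_span_pair] at hxs
  obtain ⟨u, v, huv⟩ := hxs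
  have hσ := congrArg σ huv
  have hσy : σ y = 0 := by simp [σ]
  have hσx : σ x = x := by simp [σ]
  have hσt : σ t = t := by simp [σ]
  simp only [map_add, map_mul, map_pow, hσy, hσx, hσt, mul_zero, zero_add] at hσ
  -- hσ : σ v * (x ^ 2 * (x + t ^ 2)) = x * σ s
  have hcancel : x * (σ v * (x * (x + t ^ 2))) = x * σ s := by
    rw [← hσ]; ring
  have hs' : σ s = σ v * (x * (x + t ^ 2)) :=
    (mul_left_cancel₀ (MvPolynomial.X_ne_zero 0) hcancel).symm
  have hτ : τ s = 0 := by
    have h1 : τ (σ s) = τ s := DFunLike.congr_fun tau_comp_sigma s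
    have hτx : τ x = 0 := by simp [τ]
    rw [hs', map_mul, map_mul, hτx, zero_mul, mul_zero] at h1
    exact h1.symm
  exact hs (mem_p1_of_tau_eq_zero hτ)


lemma x_not_mem_map (hp₁ : (Ideal.span ({x, y} : Set R)).IsPrime)
    (B₁ : Type) [CommRing B₁] [Algebra R B₁]
    [IsLocalization.AtPrime B₁ (Ideal.span ({x, y} : Set R))] :
    algebraMap R B₁ x ∉
      (Ideal.span ({y, x ^ 2 * (x + t ^ 2)} : Set R)).map (algebraMap R B₁) := by
  haveI := hp₁
  intro h
  rw [IsLocalization.mem_map_algebraMap_iff (Ideal.span ({x, y} : Set R)).primeCompl B₁] at h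
  obtain ⟨⟨a, s⟩, hh⟩ := h
  have heq : algebraMap R B₁ (x * (s : R)) = algebraMap R B₁ (a : R) := by
    rw [map_mul]; exact hh
  rw [IsLocalization.eq_iff_exists (Ideal.span ({x, y} : Set R)).primeCompl B₁] at heq
  obtain ⟨c, hc⟩ := heq
  have hs' : ((c : R) * (s : R)) ∉ Ideal.span ({x, y} : Set R) :=
    Submonoid.mul_mem _ c.2 s.2
  have hxs : x * ((c : R) * (s : R)) ∈ Ideal.span ({y, x ^ 2 * (x + t ^ 2)} : Set R) := by
    have : x * ((c : R) * (s : R)) = (c : R) * (a : R) := by rw [← hc]; ring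
    rw [this]
    exact Ideal.mul_mem_left _ _ a.2
  exact key_not_dvd hs' hxs

/-- The cycle identity `V(y² − x³ − t²x², y w₂ + t x² w₁, w₀, w₁, w₂ − 1)
= 2·V(x, y, w₀, w₁, w₂ − 1) + V(x + t², y, w₀, w₁, w₂ − 1)`, reduced (by setting
`w₀ = w₁ = 0`, `w₂ = 1`) to `ℂ[x,y,t]`: the ideal `⟨y, x²(x+t²)⟩` has minimal primes
`⟨x,y⟩` and `⟨x+t², y⟩`, with lengths `2` and `1` respectively at those primes. -/
theorem cycle_identity
    (hp₁ : (Ideal.span ({x, y} : Set R)).IsPrime)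
    (hp₂ : (Ideal.span ({x + t ^ 2, y} : Set R)).IsPrime)
    (B₁ : Type) [CommRing B₁] [Algebra R B₁]
    [IsLocalization.AtPrime B₁ (Ideal.span ({x, y} : Set R))]
    (B₂ : Type) [CommRing B₂] [Algebra R B₂]
    [IsLocalization.AtPrime B₂ (Ideal.span ({x + t ^ 2, y} : Set R))] :
    (Ideal.span ({y, x ^ 2 * (x + t ^ 2)} : Set R)).minimalPrimes =
        {Ideal.span ({x, y} : Set R), Ideal.span ({x + t ^ 2, y} : Set R)} ∧
      moduleLength B₁
        (B₁ ⧸ (Ideal.span ({y, x ^ 2 * (x + t ^ 2)} : Set R)).map (algebraMap R B₁)) = 2 ∧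
      moduleLength B₂
        (B₂ ⧸ (Ideal.span ({y, x ^ 2 * (x + t ^ 2)} : Set R)).map (algebraMap R B₂)) = 1 := by
  haveI := hp₁
  haveI := hp₂
  set I : Ideal R := Ideal.span ({y, x ^ 2 * (x + t ^ 2)} : Set R) with hI
  set p₁ : Ideal R := Ideal.span ({x, y} : Set R) with hP1
  set p₂ : Ideal R := Ideal.span ({x + t ^ 2, y} : Set R) with hP2
  have hyI : y ∈ I := Ideal.subset_span (Set.mem_insert _ _)
  have hgI : x ^ 2 * (x + t ^ 2) ∈ I := Ideal.subset_span (Set.mem_insert_of_mem _ rfl)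
  have hIp₁ : I ≤ p₁ := by
    rw [hI, Ideal.span_le]
    rintro z (rfl | rfl)
    · exact y_mem_p1
    · have : x ^ 2 * (x + t ^ 2) = x * (x * (x + t ^ 2)) := by ring
      rw [this]
      exact Ideal.mul_mem_right _ _ x_mem_p1
  have hIp₂ : I ≤ p₂ := by
    rw [hI, Ideal.span_le]
    rintro z (rfl | rfl)
    · exact y_mem_p2
    · exact Ideal.mul_mem_left _ _ xt_mem_p2
  refine ⟨?_, ?_, ?_⟩
  · -- minimal primes
    ext q
    constructor
    · rintro ⟨⟨hq, hIq⟩, hmin⟩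
      have hyq : y ∈ q := hIq hyI
      have hgq := hIq hgI
      rcases hq.mem_or_mem hgq with h' | h'
      · have hxq : x ∈ q := hq.mem_of_pow_mem 2 h'
        left
        have hle : p₁ ≤ q := by
          rw [hP1, Ideal.span_le]; rintro z (rfl | rfl) <;> assumption
        exact le_antisymm (hmin ⟨hp₁, hIp₁⟩ hle) hle
      · have hle : p₂ ≤ q := by
          rw [hP2, Ideal.span_le]; rintro z (rfl | rfl) <;> assumption
        right
        exact le_antisymm (hmin ⟨hp₂, hIp₂⟩ hle) hle
    · rintro (rfl | rfl)
      · refine ⟨⟨hp₁, hIp₁⟩, ?_⟩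
        rintro r ⟨hr, hIr⟩ hrq
        have hyr : y ∈ r := hIr hyI
        have hgr := hIr hgI
        rcases hr.mem_or_mem hgr with h' | h'
        · have hxr : x ∈ r := hr.mem_of_pow_mem 2 h'
          rw [hP1, Ideal.span_le]; rintro z (rfl | rfl) <;> assumption
        · exact absurd (hrq h') (xt_not_mem_p1 hp₁)
      · refine ⟨⟨hp₂, hIp₂⟩, ?_⟩
        rintro r ⟨hr, hIr⟩ hrq
        have hyr : y ∈ r := hIr hyI
        have hgr := hIr hgI
        rcases hr.mem_or_mem hgr with h' | h'
        · have hxr : x ∈ r := hr.mem_of_pow_mem 2 h'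
          exact absurd (hrq hxr) (x_not_mem_p2 hp₂)
        · rw [hP2, Ideal.span_le]; rintro z (rfl | rfl) <;> assumption
  · -- length 2 at p₁
    haveI := hp₁
    set f := algebraMap R B₁ with hf
    set J : Ideal B₁ := I.map f with hJ
    set 𝔪 : Ideal B₁ := p₁.map f with h𝔪
    show Order.krullDim (Submodule B₁ (B₁ ⧸ J)) = 2
    have hy1 : f y ∈ J := Ideal.mem_map_of_mem f hyI
    have hg1 : f (x ^ 2 * (x + t ^ 2)) ∈ J := Ideal.mem_map_of_mem f hgI
    have hunit : IsUnit (f (x + t ^ 2)) :=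
      IsLocalization.map_units B₁ (⟨x + t ^ 2, xt_not_mem_p1 hp₁⟩ : p₁.primeCompl)
    obtain ⟨w, hw⟩ := isUnit_iff_exists_inv.mp hunit
    have hx2 : f x * f x ∈ J := by
      have he : f x * f x = f (x ^ 2 * (x + t ^ 2)) * w := by
        rw [map_mul, map_pow, mul_assoc, hw, mul_one, sq]
      rw [he]
      exact Ideal.mul_mem_right _ _ hg1
    have hxJ : f x ∉ J := x_not_mem_map hp₁ B₁
    have hJm : J ≤ 𝔪 := Ideal.map_mono hIp₁
    have h𝔪span : 𝔪 = Ideal.span {f x, f y} := by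
      rw [h𝔪, hP1, Ideal.map_span, Set.image_pair]
    have hfx𝔪 : f x ∈ 𝔪 := Ideal.mem_map_of_mem f x_mem_p1
    set ξ : B₁ ⧸ J := J.mkQ (f x) with hξdef
    have hξ : ξ ≠ 0 := by
      intro h0
      exact hxJ ((Submodule.Quotient.mk_eq_zero J).mp (by rwa [hξdef, Submodule.mkQ_apply] at h0))
    set N : Submodule B₁ (B₁ ⧸ J) := Submodule.span B₁ {ξ} with hN
    have hfy0 : J.mkQ (f y) = 0 := by
      rw [Submodule.mkQ_apply]
      exact (Submodule.Quotient.mk_eq_zero J).mpr hy1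
    have hmapm : Submodule.map J.mkQ 𝔪 = N := by
      rw [h𝔪span, Ideal.span, Submodule.map_span, Set.image_pair, hfy0, Set.pair_comm,
        Submodule.span_insert_zero]
    have h𝔪mul : ∀ c ∈ 𝔪, c * f x ∈ J := by
      intro c hc
      rw [h𝔪span, Ideal.mem_span_pair] at hc
      obtain ⟨a, b, hab⟩ := hc
      have : c * f x = a * (f x * f x) + b * (f y * f x) := by rw [← hab]; ring
      rw [this]
      exact Ideal.add_mem _ (Ideal.mul_mem_left _ _ hx2)
        (Ideal.mul_mem_left _ _ (Ideal.mul_mem_right _ _ hy1))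
    have hNtop : N ≠ ⊤ := by
      intro htop
      have h1 : J.mkQ 1 ∈ N := htop ▸ Submodule.mem_top
      rw [hN, Submodule.mem_span_singleton] at h1
      obtain ⟨c, hc⟩ := h1
      have hsub : (1 : B₁) - c * f x ∈ J := by
        rw [← Submodule.Quotient.mk_eq_zero J, ← Submodule.mkQ_apply, map_sub]
        have : J.mkQ (c * f x) = c • ξ := by
          rw [hξdef, ← map_smul, smul_eq_mul]
        rw [this, hc, sub_self]
      have h1m : (1 : B₁) ∈ 𝔪 := by
        have := Ideal.add_mem 𝔪 (hJm hsub) (Ideal.mul_mem_left 𝔪 c hfx𝔪)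
        simpa using this
      exact map_prime_ne_top' p₁ (Ideal.eq_top_iff_one 𝔪 |>.mpr h1m)
    have hclass : ∀ P : Submodule B₁ (B₁ ⧸ J), P = ⊥ ∨ P = N ∨ P = ⊤ := by
      intro P
      set Q : Ideal B₁ := P.comap J.mkQ with hQ
      have hPQ : Submodule.map J.mkQ Q = P :=
        Submodule.map_comap_eq_of_surjective (Submodule.mkQ_surjective J) P
      by_cases hQt : Q = ⊤
      · right; right
        rw [← hPQ, hQt, Submodule.map_top, Submodule.range_mkQ]
      · have hQm : Q ≤ 𝔪 := by
          intro z hz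
          by_contra hz𝔪
          exact hQt (Ideal.eq_top_of_isUnit_mem Q hz (isUnit_of_not_mem_map' p₁ hz𝔪))
        have hPN : P ≤ N := by
          rw [← hPQ, ← hmapm]
          exact Submodule.map_mono hQm
        by_cases hPb : P = ⊥
        · exact Or.inl hPb
        · right; left
          obtain ⟨m, hmP, hm0⟩ := Submodule.exists_mem_ne_zero_of_ne_bot hPb
          have hmN := hPN hmP
          rw [hN, Submodule.mem_span_singleton] at hmN
          obtain ⟨c, hc⟩ := hmN
          have hc𝔪 : c ∉ 𝔪 := by
            intro hc𝔪
            apply hm0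
            rw [← hc, hξdef, ← map_smul, smul_eq_mul, Submodule.mkQ_apply,
              Submodule.Quotient.mk_eq_zero]
            exact h𝔪mul c hc𝔪
          have hcu : IsUnit c := isUnit_of_not_mem_map' p₁ hc𝔪
          have hξP : ξ ∈ P := by
            have he : ((hcu.unit⁻¹ : B₁ˣ) : B₁) • m = ξ := by
              rw [← hc, smul_smul]
              have h1 : ((hcu.unit⁻¹ : B₁ˣ) : B₁) * c = 1 := by
                have h2 := Units.inv_mul hcu.unit
                rwa [hcu.unit_spec] at h2
              rw [h1, one_smul]
            exact he ▸ Submodule.smul_mem P _ hmP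
          exact le_antisymm hPN ((Submodule.span_singleton_le_iff_mem ξ P).mpr hξP)
    refine krullDim_eq_two_of N ?_ ?_ hclass
    · rw [bot_lt_iff_ne_bot]
      intro hb
      exact hξ (by
        have : ξ ∈ N := Submodule.mem_span_singleton_self ξ
        rwa [hb, Submodule.mem_bot] at this)
    · exact lt_top_iff_ne_top.mpr hNtop
  · -- length 1 at p₂
    haveI := hp₂
    set f := algebraMap R B₂ with hf
    set J : Ideal B₂ := I.map f with hJ
    set 𝔪 : Ideal B₂ := p₂.map f with h𝔪
    show Order.krullDim (Submodule B₂ (B₂ ⧸ J)) = 1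
    have hy1 : f y ∈ J := Ideal.mem_map_of_mem f hyI
    have hg1 : f (x ^ 2 * (x + t ^ 2)) ∈ J := Ideal.mem_map_of_mem f hgI
    have hunit : IsUnit (f x) :=
      IsLocalization.map_units B₂ (⟨x, x_not_mem_p2 hp₂⟩ : p₂.primeCompl)
    obtain ⟨w, hw⟩ := isUnit_iff_exists_inv.mp (hunit.pow 2)
    have hJ𝔪 : J = 𝔪 := by
      refine le_antisymm (Ideal.map_mono hIp₂) ?_
      rw [h𝔪, hP2, Ideal.map_span, Set.image_pair, Ideal.span_le]
      rintro z (rfl | rfl)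
      · have he : f (x + t ^ 2) = f (x ^ 2 * (x + t ^ 2)) * w := by
          rw [map_mul, map_pow, mul_comm (f x ^ 2), mul_assoc, hw, mul_one]
        rw [he]
        exact Ideal.mul_mem_right _ _ hg1
      · exact hy1
    have hJtop : J ≠ ⊤ := by
      rw [hJ𝔪]; exact map_prime_ne_top' p₂
    have hbt : (⊥ : Submodule B₂ (B₂ ⧸ J)) ≠ ⊤ := by
      intro h
      have h1 : J.mkQ 1 ∈ (⊥ : Submodule B₂ (B₂ ⧸ J)) := h ▸ Submodule.mem_top
      rw [Submodule.mem_bot, Submodule.mkQ_apply, Submodule.Quotient.mk_eq_zero] at h1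
      exact hJtop ((Ideal.eq_top_iff_one J).mpr h1)
    refine krullDim_eq_one_of hbt ?_
    intro P
    set Q : Ideal B₂ := P.comap J.mkQ with hQ
    have hPQ : Submodule.map J.mkQ Q = P :=
      Submodule.map_comap_eq_of_surjective (Submodule.mkQ_surjective J) P
    by_cases hQt : Q = ⊤
    · right
      rw [← hPQ, hQt, Submodule.map_top, Submodule.range_mkQ]
    · left
      have hQm : Q ≤ 𝔪 := by
        intro z hz
        by_contra hz𝔪
        exact hQt (Ideal.eq_top_of_isUnit_mem Q hz (isUnit_of_not_mem_map' p₂ hz𝔪))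
      have hQJ : Q = J := by
        refine le_antisymm (hJ𝔪 ▸ hQm) ?_
        intro z hz
        rw [hQ, Submodule.mem_comap, Submodule.mkQ_apply]
        have : Submodule.Quotient.mk z = (0 : B₂ ⧸ J) := (Submodule.Quotient.mk_eq_zero J).mpr hz
        rw [this]
        exact Submodule.zero_mem P
      rw [← hPQ, hQJ, eq_bot_iff]
      rintro z ⟨w', hw', rfl⟩
      rw [Submodule.mem_bot, Submodule.mkQ_apply, Submodule.Quotient.mk_eq_zero]
      exact hw'

end PolarCycleTwelve
end
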